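/- Let r ≥ 1 and work in the field ℚ(u_1,…,u_r) of rational functions in r indeterminates over ℚ. Then ∏_{i=1}^{r} (u_i + u_i^{−1}) · det[ u_i^{2r + 1 − 2j} − u_i^{−(2r + 1 − 2j)} ]_{i,j=1}^{r} = det[ u_i^{2(r + 1 − j)} − u_i^{−2(r + 1 − j)} ]_{i,j=1}^{r}. (With q_i = u_i^2, the right-hand side is the Weyl denominator of Sp(2r) and the left-hand factor det[ u_i^{2r+1−2j} − u_i^{−(2r+1−2j)} ] is the Weyl denominator of Spin(2r+1); since the spinor-shifted alternants of Spin(2r+1) coincide with the shifted alternants of Sp(2r), this identity is equivalent to the character-level relation χ^{Spin(2r+1)}_{λ+Λ_r} = χ^{Spin(2r+1)}_{Λ_r} · χ^{Sp(2r)}_{λ} for every dominant tensor weight λ.) -/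

import Mathlib

open Finset MvPolynomial

lemma aux_zpow {K : Type*} [Field K] {u : K} (hu : u ≠ 0) (a : ℤ) :
    (u + u⁻¹) * (u ^ a - u ^ (-a)) =
      (u ^ (a + 1) - u ^ (-(a + 1))) + (u ^ (a - 1) - u ^ (-(a - 1))) := by
  have h1 : u ^ (a + 1) = u ^ a * u := zpow_add_one₀ hu a
  have h2 : u ^ (a - 1) = u ^ a * u⁻¹ := zpow_sub_one₀ hu a
  have h3 : u ^ (-(a + 1)) = u ^ (-a) * u⁻¹ := by
    rw [show -(a + 1) = -a - 1 by ring, zpow_sub_one₀ hu]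
  have h4 : u ^ (-(a - 1)) = u ^ (-a) * u := by
    rw [show -(a - 1) = -a + 1 by ring, zpow_add_one₀ hu]
  rw [h1, h2, h3, h4]; ring

/-- The Weyl-denominator identity relating Spin(2r+1) (spinor-shifted) and Sp(2r):
∏ᵢ (uᵢ + uᵢ⁻¹) · det[uᵢ^{2r+1−2j} − uᵢ^{−(2r+1−2j)}] = det[uᵢ^{2(r+1−j)} − uᵢ^{−2(r+1−j)}]. -/
theorem spin_odd_sp_denominator (r : ℕ) (hr : 1 ≤ r) :
    let K := FractionRing (MvPolynomial (Fin r) ℚ)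
    let u : Fin r → K := fun i => algebraMap (MvPolynomial (Fin r) ℚ) K (X i)
    (∏ i : Fin r, (u i + (u i)⁻¹)) *
    Matrix.det (Matrix.of fun i j : Fin r =>
        u i ^ (2 * (r : ℤ) - 1 - 2 * (j.val : ℤ)) -
        u i ^ (-(2 * (r : ℤ) - 1 - 2 * (j.val : ℤ)))) =
    Matrix.det (Matrix.of fun i j : Fin r =>
        u i ^ (2 * ((r : ℤ) - (j.val : ℤ))) - u i ^ (-(2 * ((r : ℤ) - (j.val : ℤ))))) := by
  intro K u
  have hu : ∀ i, u i ≠ 0 := by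
    intro i h
    exact MvPolynomial.X_ne_zero (R := ℚ) i
      (IsFractionRing.injective (MvPolynomial (Fin r) ℚ) K (h.trans (map_zero _).symm))
  set C : Matrix (Fin r) (Fin r) K := Matrix.of fun i j : Fin r =>
      u i ^ (2 * ((r : ℤ) - (j.val : ℤ))) - u i ^ (-(2 * ((r : ℤ) - (j.val : ℤ)))) with hCdef
  set M : Matrix (Fin r) (Fin r) K := Matrix.of fun k j : Fin r =>
      if k = j then 1 else if (k : ℕ) = (j : ℕ) + 1 then 1 else 0 with hMdef
  -- the matrix M is lower triangular with unit diagonal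
  have hMtri : M.BlockTriangular OrderDual.toDual := by
    intro i j hij
    have hij' : (i : ℕ) < (j : ℕ) := hij
    simp only [hMdef, Matrix.of_apply]
    rw [if_neg (by omega : ¬ i = j), if_neg (by omega)]
  have hMdet : M.det = 1 := by
    rw [Matrix.det_of_lowerTriangular M hMtri]
    refine Finset.prod_eq_one fun i _ => ?_
    simp [hMdef]
  -- compute entries of C * M
  have hCM : ∀ i j : Fin r, (C * M) i j =
      C i j + (u i ^ (2 * ((r : ℤ) - (j.val : ℤ) - 1)) -
        u i ^ (-(2 * ((r : ℤ) - (j.val : ℤ) - 1)))) := by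
    intro i j
    rw [Matrix.mul_apply]
    by_cases h : (j : ℕ) + 1 < r
    · have hne : j ≠ (⟨(j : ℕ) + 1, h⟩ : Fin r) := by
        intro hh; exact absurd (congrArg Fin.val hh) (by simp)
      rw [Fintype.sum_eq_add j ⟨(j : ℕ) + 1, h⟩ hne ?_]
      · have e1 : M j j = 1 := by simp [hMdef]
        have e2 : M ⟨(j : ℕ) + 1, h⟩ j = 1 := by
          simp only [hMdef, Matrix.of_apply]
          rw [if_neg (Ne.symm hne)]
          simp
        rw [e1, e2, mul_one, mul_one]
        congr 1
        simp only [hCdef, Matrix.of_apply]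
        have : ((⟨(j : ℕ) + 1, h⟩ : Fin r) : ℤ) = (j : ℕ) + 1 := by
          push_cast; rfl
        rw [show (2 * ((r : ℤ) - (((⟨(j : ℕ) + 1, h⟩ : Fin r) : ℕ) : ℤ))) =
            2 * ((r : ℤ) - ((j : ℕ) : ℤ) - 1) by push_cast; ring]
      · intro c hc
        have : M c j = 0 := by
          simp only [hMdef, Matrix.of_apply]
          rw [if_neg hc.1, if_neg ?_]
          intro hh
          exact hc.2 (Fin.ext (by simpa using hh))
        rw [this, mul_zero]
    · -- last column : j = r - 1
      have hj : (j : ℕ) = r - 1 := by omega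
      have hz : (2 * ((r : ℤ) - ((j : ℕ) : ℤ) - 1)) = 0 := by
        have : ((j : ℕ) : ℤ) = (r : ℤ) - 1 := by omega
        rw [this]; ring
      rw [hz]
      simp only [neg_zero, zpow_zero, sub_self, add_zero]
      rw [Fintype.sum_eq_single j ?_]
      · simp [hMdef]
      · intro c hc
        have : M c j = 0 := by
          simp only [hMdef, Matrix.of_apply]
          rw [if_neg hc, if_neg (by omega)]
        rw [this, mul_zero]
  -- main computation
  have key : (Matrix.of fun i j : Fin r =>
      (u i + (u i)⁻¹) * (u i ^ (2 * (r : ℤ) - 1 - 2 * (j.val : ℤ)) -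
        u i ^ (-(2 * (r : ℤ) - 1 - 2 * (j.val : ℤ))))) = C * M := by
    ext i j
    rw [Matrix.of_apply, hCM i j, aux_zpow (hu i),
      show (2 * (r : ℤ) - 1 - 2 * ((j : ℕ) : ℤ)) + 1 =
          2 * ((r : ℤ) - ((j : ℕ) : ℤ)) by ring,
      show (2 * (r : ℤ) - 1 - 2 * ((j : ℕ) : ℤ)) - 1 =
          2 * ((r : ℤ) - ((j : ℕ) : ℤ) - 1) by ring]
    rfl
  calc (∏ i : Fin r, (u i + (u i)⁻¹)) *
      Matrix.det (Matrix.of fun i j : Fin r =>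
        u i ^ (2 * (r : ℤ) - 1 - 2 * (j.val : ℤ)) -
        u i ^ (-(2 * (r : ℤ) - 1 - 2 * (j.val : ℤ))))
      = Matrix.det (Matrix.of fun i j : Fin r =>
        (u i + (u i)⁻¹) * (u i ^ (2 * (r : ℤ) - 1 - 2 * (j.val : ℤ)) -
          u i ^ (-(2 * (r : ℤ) - 1 - 2 * (j.val : ℤ))))) := by
        rw [← Matrix.det_mul_column (fun i => u i + (u i)⁻¹)]
        rfl
    _ = Matrix.det (C * M) := by rw [key]
    _ = C.det := by rw [Matrix.det_mul, hMdet, mul_one]
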